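/- For every odd k ≥ 3 and every non-conflictual set Φ of tagged k-words, the family HOP(k, Φ) of languages generated by HOP(k) grammars whose tagged k-word set equals Φ is closed under union: if L_1 = L(G_1) and L_2 = L(G_2) with G_1, G_2 ∈ HOP(k, Φ) having disjoint nonterminal alphabets, then the grammar G with the union of nonterminals, rules and axioms generates L_1 ∪ L_2 and is in HOP(k, Φ). -/

import Mathlib

/-!
Common framework from the paper "Higher-order Operator Precedence Languages":
tagged words over an alphabet `α` (with a distinguished end-mark letter
`hash`), the tag set Δ = {[, ], ⊙}, tagged `k`-word factors, conflictual sets,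
the strictly-locally-testable tagged language `Loc(Φ)`, handles, reductions
`⇝_Φ`, and the (tagged) maximal languages `RedBar Φ` / `Red Φ`.

Conventions: an end-word `⍟` is the alternating word `(#⊙)^m #` of (tagged)
length `k-2`, so that it contributes `(k-1)/2` end-marks on each side,
matching all the examples of the paper.
-/

namespace HOP

/-- The three tags `[`, `]`, `⊙`. -/
inductive Tagg : Type where
  | lb : Tagg
  | rb : Tagg
  | dot : Tagg
deriving DecidableEq

/-- Symbols: either a terminal letter of `α` or a tag. -/
abbrev Sym (α : Type) := α ⊕ Tagg

/-- The projection `σ` erasing all tags. -/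
def erase {α : Type} (w : List (Sym α)) : List α := w.filterMap Sum.getLeft?

/-- Tagged words: words in `Σ(ΔΣ)*`, i.e. alternating terminals and tags,
beginning and ending with a terminal. -/
inductive IsTagged {α : Type} : List (Sym α) → Prop where
  | single (a : α) : IsTagged [Sum.inl a]
  | cons (a : α) (t : Tagg) {w : List (Sym α)} :
      IsTagged w → IsTagged (Sum.inl a :: Sum.inr t :: w)

/-- `φ_k(w)`: the set of tagged `k`-words occurring as factors of `w`. -/
def taggedFactors {α : Type} (k : ℕ) (w : List (Sym α)) : Set (List (Sym α)) :=
  {u | u.length = k ∧ IsTagged u ∧ u <:+: w}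

/-- A set of tagged words is conflictual iff it contains two distinct words
with the same tag-erasure. -/
def Conflictual {α : Type} (S : Set (List (Sym α))) : Prop :=
  ∃ x ∈ S, ∃ y ∈ S, x ≠ y ∧ erase x = erase y

def NonConflictual {α : Type} (S : Set (List (Sym α))) : Prop := ¬ Conflictual S

/-- `S` is a set of tagged `k`-words. -/
def TaggedKWords {α : Type} (k : ℕ) (S : Set (List (Sym α))) : Prop :=
  ∀ u ∈ S, IsTagged u ∧ u.length = k

/-- `hashWord hash n = # ⊙ # ⊙ … #` with `n+1` end-marks (tagged length `2n+1`). -/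
def hashWord {α : Type} (hash : α) : ℕ → List (Sym α)
  | 0 => [Sum.inl hash]
  | n + 1 => Sum.inl hash :: Sum.inr Tagg.dot :: hashWord hash n

/-- The end-word `⍟ ∈ (#⊙)*#` used with width `k`: it has tagged length `k-2`
(for odd `k ≥ 3`), i.e. `(k-1)/2` end-marks. -/
def endwFor {α : Type} (hash : α) (k : ℕ) : List (Sym α) := hashWord hash ((k - 3) / 2)

/-- `wrap hash k w = ⍟ [ w ] ⍟`. -/
def wrap {α : Type} (hash : α) (k : ℕ) (w : List (Sym α)) : List (Sym α) :=
  endwFor hash k ++ Sum.inr Tagg.lb :: (w ++ Sum.inr Tagg.rb :: endwFor hash k)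

/-- `finalWord hash k = ⍟ ⊙ ⍟`, the target of a complete reduction. -/
def finalWord {α : Type} (hash : α) (k : ℕ) : List (Sym α) :=
  endwFor hash k ++ Sum.inr Tagg.dot :: endwFor hash k

/-- The (full-word form of the) `k`-strictly-locally-testable tagged language:
all tagged `k`-word factors belong to `Φ`.  A tagged word `w` is in `Loc(Φ)`
in the sense of the paper iff `wrap hash k w ∈ LocFull k Φ`. -/
def LocFull {α : Type} (k : ℕ) (Φ : Set (List (Sym α))) : Set (List (Sym α)) :=
  {w | IsTagged w ∧ taggedFactors k w ⊆ Φ}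

/-- `Loc(Φ)` as a set of tagged words `w` (tested on `⍟[w]⍟`). -/
def LocTagged {α : Type} (hash : α) (k : ℕ) (Φ : Set (List (Sym α))) :
    Set (List (Sym α)) :=
  {w | IsTagged w ∧ wrap hash k w ∈ LocFull k Φ}

/-- The body `x` of a handle `[x]`: a tagged word over `Σ - {#}` whose tags are
all `⊙`. -/
def IsHandleBody {α : Type} (hash : α) (x : List (Sym α)) : Prop :=
  IsTagged x ∧ (∀ t : Tagg, Sum.inr t ∈ x → t = Tagg.dot) ∧ Sum.inl hash ∉ x

/-- One reduction step `w[x]z ⇝_Φ w s z`, allowed when `[x]` is a handle and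
both source and target have all their tagged `k`-factors in `Φ`. -/
def RStep {α : Type} (hash : α) (k : ℕ) (Φ : Set (List (Sym α)))
    (u v : List (Sym α)) : Prop :=
  ∃ w x z, ∃ s : Tagg, IsHandleBody hash x ∧
    u = w ++ Sum.inr Tagg.lb :: (x ++ Sum.inr Tagg.rb :: z) ∧
    v = w ++ Sum.inr s :: z ∧
    u ∈ LocFull k Φ ∧ v ∈ LocFull k Φ

/-- `⇝*_Φ`. -/
def Reduces {α : Type} (hash : α) (k : ℕ) (Φ : Set (List (Sym α))) :
    List (Sym α) → List (Sym α) → Prop :=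
  Relation.ReflTransGen (RStep hash k Φ)

/-- The tagged maximal language `Red̄(Φ)`. -/
def RedBar {α : Type} (hash : α) (k : ℕ) (Φ : Set (List (Sym α))) :
    Set (List (Sym α)) :=
  {w | IsTagged w ∧ Reduces hash k Φ (wrap hash k w) (finalWord hash k)}

/-- The maximal language `Red(Φ) = σ(Red̄(Φ))`. -/
def Red {α : Type} (hash : α) (k : ℕ) (Φ : Set (List (Sym α))) : Set (List α) :=
  erase '' RedBar hash k Φ

/-- Length-`j` factors of a plain word. -/
def plainFactors {α : Type} (j : ℕ) (w : List α) : Set (List α) :=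
  {u | u.length = j ∧ u <:+: w}

/-- The `j`-strictly-locally-testable (plain) language `Loc(F)`, with
end-words `#^(j-1)`; as usual the language is `ε`-free and over `Σ - {#}`. -/
def LocPlain {α : Type} (hash : α) (j : ℕ) (F : Set (List α)) : Set (List α) :=
  {x | x ≠ [] ∧ hash ∉ x ∧
    plainFactors j
      (List.replicate (j - 1) hash ++ x ++ List.replicate (j - 1) hash) ⊆ F}

end HOP

namespace HOP

/-!  Extended context-free grammars (one rule `X → R_X` per nonterminal,
`R_X` a language over `Σ ∪ V_N`), their derivations and languages, the tagged
grammar `Ḡ` obtained via the substitution `ρ` intersected with the pattern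
`R = (V_N ∪ {[})·Σ·((V_N ∪ {⊙})·Σ)*·(V_N ∪ {]})`, and the tagged `k`-word set
`φ_k(⍟ L(Ḡ) ⍟)` of a grammar. -/

/-- A grammar with terminals `T` and nonterminals `N`: one rule `X → R_X`
(with `R_X` a set of words over `T ⊕ N`) for each nonterminal, and a set of
axioms.  Context-free grammars are those whose right-hand-side languages are
finite; extended context-free grammars those whose right-hand sides are
regular. -/
structure Gram (T N : Type) where
  rules : N → Set (List (T ⊕ N))
  axioms : Set N

/-- One derivation step. -/
def GStep {T N : Type} (G : Gram T N) (u v : List (T ⊕ N)) : Prop :=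
  ∃ p X q w, u = p ++ Sum.inr X :: q ∧ w ∈ G.rules X ∧ v = p ++ (w ++ q)

/-- Derivation relation `⇒*`. -/
def GDerives {T N : Type} (G : Gram T N) : List (T ⊕ N) → List (T ⊕ N) → Prop :=
  Relation.ReflTransGen (GStep G)

/-- The language generated by `G`. -/
def GLang {T N : Type} (G : Gram T N) : Set (List T) :=
  {x | ∃ X ∈ G.axioms, GDerives G [Sum.inr X] (x.map Sum.inl)}

/-- Operator (normal) form: no rule right-hand side contains two adjacent
nonterminals. -/
def OperatorForm {T N : Type} (G : Gram T N) : Prop :=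
  ∀ X : N, ∀ w ∈ G.rules X,
    w.Chain' (fun s₁ s₂ => s₁.isLeft = true ∨ s₂.isLeft = true)

/-- The standing assumptions of the paper: no copy rules and no `ε`-rules,
i.e. every right-hand-side word contains at least one terminal. -/
def NoCopyEps {T N : Type} (G : Gram T N) : Prop :=
  ∀ X : N, ∀ w ∈ G.rules X, ∃ a : T, Sum.inl a ∈ w

/-- The substitution `ρ`:  `ρ(a) = {a, a⊙, a], [a}` for a terminal `a`, and
`ρ(X) = {X, [, ], ⊙}` for a nonterminal `X`, applied letterwise. -/
inductive Rho {T N : Type} : List (T ⊕ N) → List (Sym T ⊕ N) → Prop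
  | nil : Rho [] []
  | plain (a : T) {w v} : Rho w v →
      Rho (Sum.inl a :: w) (Sum.inl (Sum.inl a) :: v)
  | dotAfter (a : T) {w v} : Rho w v →
      Rho (Sum.inl a :: w) (Sum.inl (Sum.inl a) :: Sum.inl (Sum.inr Tagg.dot) :: v)
  | rbAfter (a : T) {w v} : Rho w v →
      Rho (Sum.inl a :: w) (Sum.inl (Sum.inl a) :: Sum.inl (Sum.inr Tagg.rb) :: v)
  | lbBefore (a : T) {w v} : Rho w v →
      Rho (Sum.inl a :: w) (Sum.inl (Sum.inr Tagg.lb) :: Sum.inl (Sum.inl a) :: v)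
  | keep (X : N) {w v} : Rho w v → Rho (Sum.inr X :: w) (Sum.inr X :: v)
  | toTag (X : N) (t : Tagg) {w v} : Rho w v →
      Rho (Sum.inr X :: w) (Sum.inl (Sum.inr t) :: v)

/-- `s` is a (plain) terminal symbol. -/
def isT {T N : Type} (s : Sym T ⊕ N) : Prop := ∃ a : T, s = Sum.inl (Sum.inl a)

/-- `s` is a nonterminal symbol. -/
def isNT {T N : Type} (s : Sym T ⊕ N) : Prop := ∃ X : N, s = Sum.inr X

/-- The tag `t` as a (terminal) grammar symbol. -/
def tagS {T N : Type} (t : Tagg) : Sym T ⊕ N := Sum.inl (Sum.inr t)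

/-- The `((V_N ∪ {⊙})·Σ)*·(V_N ∪ {]})` tail of the pattern `R`. -/
inductive RTail {T N : Type} : List (Sym T ⊕ N) → Prop
  | last (s : Sym T ⊕ N) : (isNT s ∨ s = tagS Tagg.rb) → RTail [s]
  | step (m a : Sym T ⊕ N) {rest} : (isNT m ∨ m = tagS Tagg.dot) → isT a →
      RTail rest → RTail (m :: a :: rest)

/-- The pattern `R = (V_N ∪ {[})·Σ·((V_N ∪ {⊙})·Σ)*·(V_N ∪ {]})`. -/
def RPat {T N : Type} (v : List (Sym T ⊕ N)) : Prop :=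
  ∃ b a rest, v = b :: a :: rest ∧ (isNT b ∨ b = tagS Tagg.lb) ∧ isT a ∧ RTail rest

/-- The tagged grammar `Ḡ`: each rule `X → R_X` becomes `X → ρ(R_X) ∩ R`. -/
def taggedGram {T N : Type} (G : Gram T N) : Gram (Sym T) N where
  rules := fun X => {v | ∃ w ∈ G.rules X, Rho w v ∧ RPat v}
  axioms := G.axioms

/-- The set of tagged `k`-words of a grammar: `φ_k(⍟ L(Ḡ) ⍟)`. -/
def phiG {T N : Type} (hash : T) (k : ℕ) (G : Gram T N) : Set (List (Sym T)) :=
  {u | ∃ w ∈ GLang (taggedGram G),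
        u ∈ taggedFactors k (endwFor hash k ++ w ++ endwFor hash k)}

/-- A regular language (over a possibly infinite alphabet): recognized by a
DFA with finitely many states. -/
def IsRegularLang {β : Type} (L : Set (List β)) : Prop :=
  ∃ (σ : Type) (_ : Fintype σ) (M : DFA β σ), ∀ w, w ∈ M.accepts ↔ w ∈ L

/-- `G` is an (extended) context-free grammar in operator form, satisfying the
standing assumptions of the paper: finitely many nonterminals, regular
right-hand sides, no copy/`ε`-rules, no use of the end-mark `#`. -/
def WellFormed {T N : Type} (hash : T) (G : Gram T N) : Prop :=
  Finite N ∧ (∀ X, IsRegularLang (G.rules X)) ∧ OperatorForm G ∧ NoCopyEps G ∧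
    (∀ X, ∀ w ∈ G.rules X, Sum.inl hash ∉ w)

/-- `G` is a HOP(`k`) grammar: the set of tagged `k`-words occurring in the
sentences of its tagged grammar is non-conflictual (Definition 8). -/
def IsHOPg {T N : Type} (hash : T) (k : ℕ) (G : Gram T N) : Prop :=
  NonConflictual (phiG hash k G)

end HOP

namespace HOP

/-- The union grammar of two grammars with disjoint nonterminal alphabets:
nonterminals `N₁ ⊕ N₂`, union of (relabelled) rules and of axioms. -/
def unionGram {T N1 N2 : Type} (G1 : Gram T N1) (G2 : Gram T N2) :
    Gram T (N1 ⊕ N2) where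
  rules := fun X =>
    match X with
    | Sum.inl X1 => (List.map (Sum.map id Sum.inl)) '' G1.rules X1
    | Sum.inr X2 => (List.map (Sum.map id Sum.inr)) '' G2.rules X2
  axioms := Sum.inl '' G1.axioms ∪ Sum.inr '' G2.axioms

section UnionAux

variable {S N M : Type}

lemma map_inl_of_map {f : N → M} :
    ∀ (v : List (S ⊕ N)) (x : List S),
      v.map (Sum.map id f) = x.map Sum.inl → v = x.map Sum.inl := by
  intro v
  induction v with
  | nil =>
    intro x h
    cases x with
    | nil => rfl
    | cons a x => simp at h
  | cons s v ih =>
    intro x h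
    cases x with
    | nil => simp at h
    | cons a x =>
      simp only [List.map_cons, List.cons.injEq] at h ⊢
      obtain ⟨h1, h2⟩ := h
      refine ⟨?_, ih x h2⟩
      cases s with
      | inl b => simpa using h1
      | inr X => simp at h1

lemma GStep.map_union {G : Gram S N} {G' : Gram S M} {f : N → M}
    (hr : ∀ X, G'.rules (f X) = (List.map (Sum.map id f)) '' G.rules X)
    {u v : List (S ⊕ N)} (h : GStep G u v) :
    GStep G' (u.map (Sum.map id f)) (v.map (Sum.map id f)) := by
  obtain ⟨p, X, q, w, hu, hw, hv⟩ := h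
  exact ⟨p.map (Sum.map id f), f X, q.map (Sum.map id f), w.map (Sum.map id f),
    by simp [hu], (hr X) ▸ ⟨w, hw, rfl⟩, by simp [hv]⟩

lemma GStep.of_map_union {G : Gram S N} {G' : Gram S M} {f : N → M}
    (hr : ∀ X, G'.rules (f X) = (List.map (Sum.map id f)) '' G.rules X)
    {u : List (S ⊕ N)} {v' : List (S ⊕ M)}
    (h : GStep G' (u.map (Sum.map id f)) v') :
    ∃ v, v' = v.map (Sum.map id f) ∧ GStep G u v := by
  obtain ⟨p, Y, q, w', hu, hw, hv⟩ := h
  obtain ⟨p₀, r₀, hu0, hp, hr0⟩ := List.map_eq_append_iff.mp hu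
  obtain ⟨s, q₀, hr1, hs, hq⟩ := List.map_eq_cons_iff.mp hr0
  cases s with
  | inl b => simp at hs
  | inr X =>
    have hY : Y = f X := by simpa using hs.symm
    subst hY
    rw [hr X] at hw
    obtain ⟨w, hwG, rfl⟩ := hw
    refine ⟨p₀ ++ (w ++ q₀), ?_, p₀, X, q₀, w, by rw [hu0, hr1], hwG, rfl⟩
    simp [hv, hp, hq]

lemma GDerives.map_union {G : Gram S N} {G' : Gram S M} {f : N → M}
    (hr : ∀ X, G'.rules (f X) = (List.map (Sum.map id f)) '' G.rules X)
    {u v : List (S ⊕ N)} (h : GDerives G u v) :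
    GDerives G' (u.map (Sum.map id f)) (v.map (Sum.map id f)) :=
  Relation.ReflTransGen.lift (List.map (Sum.map id f)) (fun _ _ hab => GStep.map_union hr hab) _ _ h

lemma GDerives.of_map_union {G : Gram S N} {G' : Gram S M} {f : N → M}
    (hr : ∀ X, G'.rules (f X) = (List.map (Sum.map id f)) '' G.rules X)
    {u : List (S ⊕ N)} {v' : List (S ⊕ M)}
    (h : GDerives G' (u.map (Sum.map id f)) v') :
    ∃ v, v' = v.map (Sum.map id f) ∧ GDerives G u v := by
  induction h with
  | refl => exact ⟨u, rfl, Relation.ReflTransGen.refl⟩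
  | tail hab hbc ih =>
    obtain ⟨b, rfl, hb⟩ := ih
    obtain ⟨c, rfl, hc⟩ := GStep.of_map_union hr hbc
    exact ⟨c, rfl, hb.tail hc⟩

lemma glang_unionGram {N1 N2 : Type} (G1 : Gram S N1) (G2 : Gram S N2) :
    GLang (unionGram G1 G2) = GLang G1 ∪ GLang G2 := by
  have hr1 : ∀ X, (unionGram G1 G2).rules (Sum.inl X)
      = (List.map (Sum.map id (Sum.inl : N1 → N1 ⊕ N2))) '' G1.rules X := fun _ => rfl
  have hr2 : ∀ X, (unionGram G1 G2).rules (Sum.inr X)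
      = (List.map (Sum.map id (Sum.inr : N2 → N1 ⊕ N2))) '' G2.rules X := fun _ => rfl
  ext x
  constructor
  · rintro ⟨X, hX, hd⟩
    rcases hX with ⟨X1, h1, rfl⟩ | ⟨X2, h2, rfl⟩
    · left
      refine ⟨X1, h1, ?_⟩
      obtain ⟨v, hv, hder⟩ := GDerives.of_map_union hr1 (u := [Sum.inr X1]) hd
      rwa [map_inl_of_map v x hv.symm] at hder
    · right
      refine ⟨X2, h2, ?_⟩
      obtain ⟨v, hv, hder⟩ := GDerives.of_map_union hr2 (u := [Sum.inr X2]) hd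
      rwa [map_inl_of_map v x hv.symm] at hder
  · rintro (⟨X1, h1, hd⟩ | ⟨X2, h2, hd⟩)
    · refine ⟨Sum.inl X1, Or.inl ⟨X1, h1, rfl⟩, ?_⟩
      have := GDerives.map_union hr1 hd
      simpa [Function.comp_def] using this
    · refine ⟨Sum.inr X2, Or.inr ⟨X2, h2, rfl⟩, ?_⟩
      have := GDerives.map_union hr2 hd
      simpa [Function.comp_def] using this

lemma Rho.map_union {T : Type} {f : N → M} {w : List (T ⊕ N)} {v : List (Sym T ⊕ N)}
    (h : Rho w v) : Rho (w.map (Sum.map id f)) (v.map (Sum.map id f)) := by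
  induction h with
  | nil => exact Rho.nil
  | plain a _ ih => exact Rho.plain a ih
  | dotAfter a _ ih => exact Rho.dotAfter a ih
  | rbAfter a _ ih => exact Rho.rbAfter a ih
  | lbBefore a _ ih => exact Rho.lbBefore a ih
  | keep X _ ih => exact Rho.keep (f X) ih
  | toTag X t _ ih => exact Rho.toTag (f X) t ih

lemma Rho.of_map_union {T : Type} {f : N → M} :
    ∀ {w : List (T ⊕ N)} {v' : List (Sym T ⊕ M)},
      Rho (w.map (Sum.map id f)) v' →
      ∃ v, v' = v.map (Sum.map id f) ∧ Rho w v := by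
  intro w
  induction w with
  | nil =>
    intro v' h
    cases h
    exact ⟨[], rfl, Rho.nil⟩
  | cons s w ih =>
    intro v' h
    cases s with
    | inl a =>
      cases h with
      | plain _ h0 =>
        obtain ⟨v, rfl, hv⟩ := ih h0
        exact ⟨Sum.inl (Sum.inl a) :: v, rfl, Rho.plain a hv⟩
      | dotAfter _ h0 =>
        obtain ⟨v, rfl, hv⟩ := ih h0
        exact ⟨Sum.inl (Sum.inl a) :: Sum.inl (Sum.inr Tagg.dot) :: v, rfl,
          Rho.dotAfter a hv⟩
      | rbAfter _ h0 =>
        obtain ⟨v, rfl, hv⟩ := ih h0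
        exact ⟨Sum.inl (Sum.inl a) :: Sum.inl (Sum.inr Tagg.rb) :: v, rfl,
          Rho.rbAfter a hv⟩
      | lbBefore _ h0 =>
        obtain ⟨v, rfl, hv⟩ := ih h0
        exact ⟨Sum.inl (Sum.inr Tagg.lb) :: Sum.inl (Sum.inl a) :: v, rfl,
          Rho.lbBefore a hv⟩
    | inr X =>
      cases h with
      | keep _ h0 =>
        obtain ⟨v, rfl, hv⟩ := ih h0
        exact ⟨Sum.inr X :: v, rfl, Rho.keep X hv⟩
      | toTag _ t h0 =>
        obtain ⟨v, rfl, hv⟩ := ih h0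
        exact ⟨Sum.inl (Sum.inr t) :: v, rfl, Rho.toTag X t hv⟩

lemma isT_map_iff {T : Type} {f : N → M} {s : Sym T ⊕ N} :
    isT (Sum.map id f s) ↔ isT s := by
  cases s <;> simp [isT]

lemma isNT_map_iff {T : Type} {f : N → M} {s : Sym T ⊕ N} :
    isNT (Sum.map id f s) ↔ isNT s := by
  cases s <;> simp [isNT]

lemma tagS_map_iff {T : Type} {f : N → M} {s : Sym T ⊕ N} {t : Tagg} :
    Sum.map id f s = (tagS t : Sym T ⊕ M) ↔ s = tagS t := by
  cases s with
  | inl b => simp [tagS]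
  | inr X => simp [tagS]

lemma RTail.map_union {T : Type} {f : N → M} {v : List (Sym T ⊕ N)}
    (h : RTail v) : RTail (v.map (Sum.map id f)) := by
  induction h with
  | last s hs =>
    exact RTail.last _ (hs.imp (fun h' => isNT_map_iff.mpr h')
      (fun h' => tagS_map_iff.mpr h'))
  | step m a hm ha _ ih =>
    exact RTail.step _ _ (hm.imp (fun h' => isNT_map_iff.mpr h')
      (fun h' => tagS_map_iff.mpr h')) (isT_map_iff.mpr ha) ih

lemma RTail.of_map_union {T : Type} {f : N → M} :
    ∀ {l : List (Sym T ⊕ M)}, RTail l →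
      ∀ (v : List (Sym T ⊕ N)), l = v.map (Sum.map id f) → RTail v := by
  intro l h
  induction h with
  | last s hs =>
    intro v hv
    obtain ⟨s₀, v₀, rfl, hs₀, hv₀⟩ := List.map_eq_cons_iff.mp hv.symm
    have : v₀ = [] := by simpa using hv₀
    subst this
    subst hs₀
    exact RTail.last s₀ (hs.imp (fun h' => isNT_map_iff.mp h')
      (fun h' => tagS_map_iff.mp h'))
  | step m a hm ha hrest ih =>
    intro v hv
    obtain ⟨m₀, v₁, rfl, hm₀, hv₁⟩ := List.map_eq_cons_iff.mp hv.symm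
    obtain ⟨a₀, v₂, rfl, ha₀, hv₂⟩ := List.map_eq_cons_iff.mp hv₁
    subst hm₀
    subst ha₀
    exact RTail.step m₀ a₀ (hm.imp (fun h' => isNT_map_iff.mp h')
      (fun h' => tagS_map_iff.mp h')) (isT_map_iff.mp ha) (ih v₂ hv₂.symm)

lemma RPat.map_union {T : Type} {f : N → M} {v : List (Sym T ⊕ N)}
    (h : RPat v) : RPat (v.map (Sum.map id f)) := by
  obtain ⟨b, a, rest, rfl, hb, ha, hrest⟩ := h
  exact ⟨Sum.map id f b, Sum.map id f a, rest.map (Sum.map id f), by simp,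
    hb.imp (fun h' => isNT_map_iff.mpr h') (fun h' => tagS_map_iff.mpr h'),
    isT_map_iff.mpr ha, hrest.map_union⟩

lemma RPat.of_map_union {T : Type} {f : N → M} {v : List (Sym T ⊕ N)}
    (h : RPat (v.map (Sum.map id f))) : RPat v := by
  obtain ⟨b, a, rest, heq, hb, ha, hrest⟩ := h
  obtain ⟨b₀, v₁, rfl, hb₀, hv₁⟩ := List.map_eq_cons_iff.mp heq
  obtain ⟨a₀, v₂, rfl, ha₀, hv₂⟩ := List.map_eq_cons_iff.mp hv₁
  subst hb₀
  subst ha₀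
  exact ⟨b₀, a₀, v₂, rfl,
    hb.imp (fun h' => isNT_map_iff.mp h') (fun h' => tagS_map_iff.mp h'),
    isT_map_iff.mp ha, RTail.of_map_union hrest v₂ hv₂.symm⟩

lemma taggedGram_union {T N1 N2 : Type} (G1 : Gram T N1) (G2 : Gram T N2) :
    taggedGram (unionGram G1 G2) = unionGram (taggedGram G1) (taggedGram G2) := by
  have hrule : (taggedGram (unionGram G1 G2)).rules
      = (unionGram (taggedGram G1) (taggedGram G2)).rules := by
    funext X
    cases X with
    | inl X1 =>
      ext v'
      constructor
      · rintro ⟨w', ⟨w, hw, rfl⟩, hrho, hpat⟩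
        obtain ⟨v, rfl, hv⟩ := Rho.of_map_union hrho
        exact ⟨v, ⟨w, hw, hv, RPat.of_map_union hpat⟩, rfl⟩
      · rintro ⟨v, ⟨w, hw, hrho, hpat⟩, rfl⟩
        exact ⟨w.map (Sum.map id Sum.inl), ⟨w, hw, rfl⟩, hrho.map_union,
          hpat.map_union⟩
    | inr X2 =>
      ext v'
      constructor
      · rintro ⟨w', ⟨w, hw, rfl⟩, hrho, hpat⟩
        obtain ⟨v, rfl, hv⟩ := Rho.of_map_union hrho
        exact ⟨v, ⟨w, hw, hv, RPat.of_map_union hpat⟩, rfl⟩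
      · rintro ⟨v, ⟨w, hw, hrho, hpat⟩, rfl⟩
        exact ⟨w.map (Sum.map id Sum.inr), ⟨w, hw, rfl⟩, hrho.map_union,
          hpat.map_union⟩
  calc taggedGram (unionGram G1 G2)
      = ⟨(taggedGram (unionGram G1 G2)).rules,
          (taggedGram (unionGram G1 G2)).axioms⟩ := rfl
    _ = ⟨(unionGram (taggedGram G1) (taggedGram G2)).rules,
          (taggedGram (unionGram G1 G2)).axioms⟩ := by rw [hrule]
    _ = unionGram (taggedGram G1) (taggedGram G2) := rfl

lemma phiG_union {T N1 N2 : Type} (hash : T) (k : ℕ)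
    (G1 : Gram T N1) (G2 : Gram T N2) :
    phiG hash k (unionGram G1 G2) = phiG hash k G1 ∪ phiG hash k G2 := by
  unfold phiG
  rw [taggedGram_union, glang_unionGram]
  ext u
  simp only [Set.mem_setOf_eq, Set.mem_union]
  constructor
  · rintro ⟨w, (hw | hw), hu⟩
    · exact Or.inl ⟨w, hw, hu⟩
    · exact Or.inr ⟨w, hw, hu⟩
  · rintro (⟨w, hw, hu⟩ | ⟨w, hw, hu⟩)
    · exact ⟨w, Or.inl hw, hu⟩
    · exact ⟨w, Or.inr hw, hu⟩

end UnionAux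

/-- **Theorem 6, union case**: if `G₁, G₂ ∈ HOP(k, Φ)` (with disjoint
nonterminal alphabets), then the union grammar generates `L(G₁) ∪ L(G₂)` and
is again in `HOP(k, Φ)` (its tagged `k`-word set is `Φ`). -/
theorem hop_union {T N1 N2 : Type} (hash : T) (k : ℕ) (hk : Odd k)
    (hk3 : 3 ≤ k) (Φ : Set (List (Sym T))) (hΦ : NonConflictual Φ)
    (G1 : Gram T N1) (G2 : Gram T N2)
    (hwf1 : WellFormed hash G1) (hwf2 : WellFormed hash G2)
    (hΦ1 : phiG hash k G1 = Φ) (hΦ2 : phiG hash k G2 = Φ) :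
    GLang (unionGram G1 G2) = GLang G1 ∪ GLang G2 ∧
    OperatorForm (unionGram G1 G2) ∧
    phiG hash k (unionGram G1 G2) = Φ := by
  refine ⟨glang_unionGram G1 G2, ?_, ?_⟩
  · rintro (X | X) w hw
    · obtain ⟨w₀, hw₀, rfl⟩ := hw
      rw [List.Chain', List.isChain_map]
      exact (hwf1.2.2.1 X w₀ hw₀).imp (fun s₁ s₂ h => by
        simpa [Sum.isLeft_map] using h)
    · obtain ⟨w₀, hw₀, rfl⟩ := hw
      rw [List.Chain', List.isChain_map]
      exact (hwf2.2.2.1 X w₀ hw₀).imp (fun s₁ s₂ h => by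
        simpa [Sum.isLeft_map] using h)
  · rw [phiG_union, hΦ1, hΦ2, Set.union_self]

end HOP
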